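/- Let p(x) = ∏_{j=1}^d (x - λ_j) be a monic polynomial with integer coefficients. If |λ_j| ≤ 1 for all j with 1 ≤ j ≤ d and no λ_j is zero, then there exists k ≥ 1 such that λ_j^k = 1 for all 1 ≤ j ≤ d. -/

import Mathlib

open Polynomial IntermediateField

lemma mult_le_one (s : Multiset ℝ) (h1 : ∀ a ∈ s, 0 ≤ a ∧ a ≤ 1) : s.prod ≤ 1 := by
  induction s using Multiset.induction with
  | empty => simp
  | cons a s ih =>
    rw [Multiset.prod_cons]
    have ha := h1 a (Multiset.mem_cons_self a s)
    have hs : s.prod ≤ 1 := ih fun b hb => h1 b (Multiset.mem_cons_of_mem hb)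
    have : (0:ℝ) ≤ s.prod := Multiset.prod_nonneg fun b hb => (h1 b (Multiset.mem_cons_of_mem hb)).1
    nlinarith

lemma mult_eq_one (s : Multiset ℝ) (h1 : ∀ a ∈ s, 0 ≤ a ∧ a ≤ 1)
    (hp : 1 ≤ s.prod) : ∀ a ∈ s, a = 1 := by
  intro a ha
  have hs := (Multiset.cons_erase ha).symm
  have ht0 : (0:ℝ) ≤ (s.erase a).prod :=
    Multiset.prod_nonneg fun b hb => (h1 b (Multiset.mem_of_mem_erase hb)).1
  have ht1 : (s.erase a).prod ≤ 1 :=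
    mult_le_one _ fun b hb => h1 b (Multiset.mem_of_mem_erase hb)
  rw [hs, Multiset.prod_cons] at hp
  have := (h1 a ha).1
  nlinarith [(h1 a ha).2]

lemma root_of_unity_of_conj_le (x : ℂ) (hxi : IsIntegral ℤ x) (hx0 : x ≠ 0)
    (hroots : ∀ z : ℂ, (Polynomial.aeval z) (minpoly ℚ x) = 0 → ‖z‖ ≤ 1) :
    ∃ n : ℕ, 0 < n ∧ x ^ n = 1 := by
  have hxq : IsIntegral ℚ x := hxi.tower_top
  have hmq : minpoly ℚ x = (minpoly ℤ x).map (algebraMap ℤ ℚ) :=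
    minpoly.isIntegrallyClosed_eq_field_fractions' ℚ hxi
  -- constant coefficient is a nonzero integer
  have hc0 : (minpoly ℤ x).coeff 0 ≠ 0 := by
    intro h
    apply minpoly.coeff_zero_ne_zero hxq hx0
    rw [hmq, coeff_map, h, map_zero]
  -- the mapped minimal polynomial over ℂ
  set Q : ℂ[X] := (minpoly ℚ x).map (algebraMap ℚ ℂ) with hQ
  have hQm : Q.Monic := (minpoly.monic hxq).map _
  have hQsplits : Q.Splits :=
    IsAlgClosed.splits _
  have hprod : Q.coeff 0 = (-1) ^ Q.natDegree * Q.roots.prod :=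
    hQsplits.coeff_zero_eq_prod_roots_of_monic hQm
  have habs_mem : ∀ z ∈ Q.roots, ‖z‖ ≤ 1 := by
    intro z hz
    apply hroots
    have := (mem_roots hQm.ne_zero).1 hz
    rwa [IsRoot, hQ, eval_map, ← aeval_def] at this
  have hcoeff : ‖Q.coeff 0‖ = |(((minpoly ℤ x).coeff 0 : ℤ) : ℝ)| := by
    rw [hQ, coeff_map, hmq, coeff_map]
    simp
  have hge1 : (1:ℝ) ≤ (Q.roots.map (‖·‖)).prod := by
    have h1 : ‖Q.roots.prod‖ = (Q.roots.map (‖·‖)).prod := by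
      simpa using map_multiset_prod (normHom : ℂ →*₀ ℝ) Q.roots
    have h2 : ‖Q.coeff 0‖ = (Q.roots.map (‖·‖)).prod := by
      rw [hprod, norm_mul, norm_pow]
      simp [h1]
    rw [← h2, hcoeff]
    have : (1:ℤ) ≤ |(minpoly ℤ x).coeff 0| := Int.one_le_abs (by exact_mod_cast hc0)
    calc (1:ℝ) ≤ |((minpoly ℤ x).coeff 0 : ℝ)| := by rw [← Int.cast_abs]; exact_mod_cast this
    _ = _ := rfl
  have habs1 : ∀ z ∈ Q.roots, ‖z‖ = 1 := by
    intro z hz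
    exact mult_eq_one _ (by
      intro a ha
      obtain ⟨w, hw, rfl⟩ := Multiset.mem_map.1 ha
      exact ⟨norm_nonneg w, habs_mem w hw⟩) hge1 _
      (Multiset.mem_map.2 ⟨z, hz, rfl⟩)
  haveI : FiniteDimensional ℚ ℚ⟮x⟯ := IntermediateField.adjoin.finiteDimensional hxq
  haveI : NumberField ℚ⟮x⟯ := ⟨⟩
  set g := AdjoinSimple.gen ℚ x with hg
  have hgx : algebraMap ℚ⟮x⟯ ℂ g = x := AdjoinSimple.algebraMap_gen ℚ x
  have hgi : IsIntegral ℤ g := by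
    rw [← isIntegral_algebraMap_iff (algebraMap ℚ⟮x⟯ ℂ).injective, hgx]; exact hxi
  have hnorm : ∀ φ : ℚ⟮x⟯ →+* ℂ, ‖φ g‖ = 1 := by
    intro φ
    have h0 : (Polynomial.aeval (φ g)) (minpoly ℚ x) = 0 := by
      rw [← minpoly_gen ℚ x]
      have : φ g = φ.toRatAlgHom g := rfl
      rw [this, aeval_algHom_apply φ.toRatAlgHom g]
      erw [minpoly.aeval, map_zero]
    have hmem : φ g ∈ Q.roots := by
      rw [mem_roots hQm.ne_zero, IsRoot, hQ, eval_map, ← aeval_def]; exact h0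
    simpa using habs1 _ hmem
  obtain ⟨n, hn, he⟩ := NumberField.Embeddings.pow_eq_one_of_norm_eq_one ℚ⟮x⟯ ℂ hgi hnorm
  exact ⟨n, hn, by rw [← hgx, ← map_pow, he, map_one]⟩

/-- Kronecker's Lemma: if a monic integer polynomial has all its complex roots
of modulus at most 1 and none equal to zero, then all roots are roots of unity. -/
theorem kronecker_lemma (d : ℕ) (p : Polynomial ℤ) (lam : Fin d → ℂ)
    (hmonic : p.Monic)
    (hfact : p.map (Int.castRingHom ℂ) = ∏ j, (X - C (lam j)))
    (hle : ∀ j, ‖lam j‖ ≤ 1)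
    (hne : ∀ j, lam j ≠ 0) :
    ∃ k : ℕ, 1 ≤ k ∧ ∀ j, lam j ^ k = 1 := by
  have haev : ∀ j, (Polynomial.aeval (lam j)) p = 0 := by
    intro j
    rw [aeval_def, ← eval_map]
    have : p.map (algebraMap ℤ ℂ) = p.map (Int.castRingHom ℂ) := rfl
    rw [this, hfact]
    rw [eval_prod]
    apply Finset.prod_eq_zero (Finset.mem_univ j)
    simp
  have hint : ∀ j, IsIntegral ℤ (lam j) := fun j => ⟨p, hmonic, haev j⟩
  have key : ∀ j, ∃ n : ℕ, 0 < n ∧ lam j ^ n = 1 := by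
    intro j
    apply root_of_unity_of_conj_le (lam j) (hint j) (hne j)
    intro z hz
    -- minpoly ℚ (lam j) divides p over ℚ
    have hdvd : minpoly ℚ (lam j) ∣ p.map (algebraMap ℤ ℚ) := by
      apply minpoly.dvd
      rw [aeval_map_algebraMap]
      exact haev j
    have hz2 : (Polynomial.aeval z) (p.map (algebraMap ℤ ℚ)) = 0 := by
      obtain ⟨q, hq⟩ := hdvd
      rw [hq, map_mul, hz, zero_mul]
    have hz3 : eval z (p.map (Int.castRingHom ℂ)) = 0 := by
      have : p.map (Int.castRingHom ℂ) = (p.map (algebraMap ℤ ℚ)).map (algebraMap ℚ ℂ) := by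
        rw [Polynomial.map_map]
        rfl
      rw [this, eval_map, ← aeval_def]
      exact hz2
    rw [hfact, eval_prod] at hz3
    obtain ⟨i, -, hi⟩ := Finset.prod_eq_zero_iff.1 hz3
    simp only [eval_sub, eval_X, eval_C, sub_eq_zero] at hi
    rw [hi]
    exact hle i
  choose n hn hpow using key
  refine ⟨∏ j, n j, ?_, ?_⟩
  · exact Finset.one_le_prod' fun j _ => hn j
  · intro j
    rw [← Finset.mul_prod_erase Finset.univ n (Finset.mem_univ j), pow_mul, hpow j, one_pow]
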